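/- Let K, t, L be positive integers with tL ≤ K. Then t multiplied by the number of t-element subsets T of {1,…,K} such that every pair of distinct elements j1, j2 ∈ T satisfies Mod(j1−j2, K) ≥ L (equivalently, all pairwise cyclic distances in Z/KZ are at least L) equals K · C(K − tL + t − 1, t − 1). In other words, the number of such subsets is (K/t) · C(K − t(L−1) − 1, t − 1). -/

import Mathlib

/-- `zmod1 b a` is the representative of the integer `b` modulo `a` lying in
`{1, …, a}` (i.e. `Mod(b,a)` in the paper's notation). -/
def zmod1 (b : ℤ) (a : ℕ) : ℤ := if b % (a : ℤ) = 0 then (a : ℤ) else b % (a : ℤ)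

namespace Stmt4Aux


lemma zmod1_lb {K : ℕ} (hK : 1 ≤ K) (b : ℤ) : 1 ≤ zmod1 b K := by
  unfold zmod1
  have h0 : (0:ℤ) < K := by exact_mod_cast hK
  have h1 : 0 ≤ b % (K:ℤ) := Int.emod_nonneg b (by omega)
  split <;> omega

lemma zmod1_ub {K : ℕ} (hK : 1 ≤ K) (b : ℤ) : zmod1 b K ≤ K := by
  unfold zmod1
  have h0 : (0:ℤ) < K := by exact_mod_cast hK
  have h2 : b % (K:ℤ) < K := Int.emod_lt_of_pos b h0
  split <;> omega

lemma zmod1_dvd (b : ℤ) (K : ℕ) : (K:ℤ) ∣ (b - zmod1 b K) := by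
  unfold zmod1
  split
  · next h =>
    have hb : (K:ℤ) ∣ b := Int.dvd_of_emod_eq_zero h
    exact dvd_sub hb dvd_rfl
  · have : b - b % (K:ℤ) = (K:ℤ) * (b / K) := by
      have := Int.emod_add_mul_ediv b (K:ℤ)
      linarith
    rw [this]
    exact Dvd.intro _ rfl

lemma zmod1_congr {a b : ℤ} {K : ℕ} (h : (K:ℤ) ∣ (a - b)) : zmod1 a K = zmod1 b K := by
  have hmod : a % (K:ℤ) = b % (K:ℤ) :=
    Int.emod_eq_emod_iff_emod_sub_eq_zero.mpr (Int.emod_eq_zero_of_dvd h)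
  unfold zmod1
  rw [hmod]

lemma zmod1_eq_self {a : ℤ} {K : ℕ} (h1 : 1 ≤ a) (h2 : a ≤ K) : zmod1 a K = a := by
  unfold zmod1
  rcases eq_or_lt_of_le h2 with h | h
  · subst h
    simp
  · have : a % (K:ℤ) = a := Int.emod_eq_of_lt (by omega) h
    rw [this]
    split <;> omega

-- for natural a with 1 ≤ a ≤ K
lemma zmod1_nat {a K : ℕ} (h1 : 1 ≤ a) (h2 : a ≤ K) : zmod1 (a:ℤ) K = a :=
  zmod1_eq_self (by exact_mod_cast h1) (by exact_mod_cast h2)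

lemma zmod1_neg_nat {a K : ℕ} (h1 : 1 ≤ a) (h2 : a ≤ K - 1) : zmod1 (-(a:ℤ)) K = ((K - a : ℕ) : ℤ) := by
  have hK : 1 ≤ K := by omega
  have := zmod1_congr (a := -(a:ℤ)) (b := ((K - a : ℕ) : ℤ)) (K := K) (by
    push_cast [Nat.cast_sub (by omega : a ≤ K)]
    ring_nf
    exact ⟨-1, by ring⟩)
  rw [this, zmod1_nat (by omega) (by omega)]

lemma nat_eq_of_congr {K a b : ℕ} (ha1 : 1 ≤ a) (ha2 : a ≤ K) (hb1 : 1 ≤ b) (hb2 : b ≤ K)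
    (h : (K:ℤ) ∣ ((a:ℤ) - b)) : a = b := by
  rcases h with ⟨c, hc⟩
  have hK : (0:ℤ) < K := by exact_mod_cast (show 0 < K by omega)
  rcases lt_trichotomy c 0 with h' | h' | h'
  · nlinarith [(by exact_mod_cast ha1 : (1:ℤ) ≤ a), (by exact_mod_cast hb2 : (b:ℤ) ≤ K),
      (show c ≤ -1 by omega)]
  · subst h'; simp at hc; omega
  · nlinarith [(by exact_mod_cast ha2 : (a:ℤ) ≤ K), (by exact_mod_cast hb1 : (1:ℤ) ≤ b),
      (show 1 ≤ c by omega)]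


def off (K j x : ℕ) : ℕ := (zmod1 ((x:ℤ) - (j:ℤ)) K).toNat
def unoff (K j s : ℕ) : ℕ := (zmod1 ((j:ℤ) + (s:ℤ)) K).toNat

lemma off_cast {K : ℕ} (hK : 1 ≤ K) (j x : ℕ) : ((off K j x : ℕ) : ℤ) = zmod1 ((x:ℤ) - j) K :=
  Int.toNat_of_nonneg (by linarith [zmod1_lb hK ((x:ℤ) - j)])

lemma unoff_cast {K : ℕ} (hK : 1 ≤ K) (j s : ℕ) : ((unoff K j s : ℕ) : ℤ) = zmod1 ((j:ℤ) + s) K :=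
  Int.toNat_of_nonneg (by linarith [zmod1_lb hK ((j:ℤ) + s)])

lemma off_lb {K : ℕ} (hK : 1 ≤ K) (j x : ℕ) : 1 ≤ off K j x := by
  have := zmod1_lb hK ((x:ℤ) - j); have := off_cast hK j x; omega

lemma off_ub {K : ℕ} (hK : 1 ≤ K) (j x : ℕ) : off K j x ≤ K := by
  have := zmod1_ub hK ((x:ℤ) - j); have := off_cast hK j x; omega

lemma unoff_lb {K : ℕ} (hK : 1 ≤ K) (j s : ℕ) : 1 ≤ unoff K j s := by
  have := zmod1_lb hK ((j:ℤ) + s); have := unoff_cast hK j s; omega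

lemma unoff_ub {K : ℕ} (hK : 1 ≤ K) (j s : ℕ) : unoff K j s ≤ K := by
  have := zmod1_ub hK ((j:ℤ) + s); have := unoff_cast hK j s; omega

lemma off_dvd {K : ℕ} (hK : 1 ≤ K) (j x : ℕ) : (K:ℤ) ∣ ((x:ℤ) - j - off K j x) := by
  rw [off_cast hK]; exact zmod1_dvd _ _

lemma unoff_dvd {K : ℕ} (hK : 1 ≤ K) (j s : ℕ) : (K:ℤ) ∣ ((j:ℤ) + s - unoff K j s) := by
  rw [unoff_cast hK]; exact zmod1_dvd _ _

lemma unoff_off {K j x : ℕ} (hj1 : 1 ≤ j) (hj2 : j ≤ K) (hx1 : 1 ≤ x) (hx2 : x ≤ K) :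
    unoff K j (off K j x) = x := by
  have hK : 1 ≤ K := by omega
  refine nat_eq_of_congr (unoff_lb hK j _) (unoff_ub hK j _) hx1 hx2 ?_
  have h1 := unoff_dvd hK j (off K j x)
  have h2 := off_dvd hK j x
  have : ((unoff K j (off K j x) : ℕ) : ℤ) - x =
      -(((j:ℤ) + off K j x - unoff K j (off K j x))) - ((x:ℤ) - j - off K j x) := by push_cast; ring
  rw [this]
  exact dvd_sub (dvd_neg.mpr h1) h2

lemma off_unoff {K j s : ℕ} (hj1 : 1 ≤ j) (hj2 : j ≤ K) (hs1 : 1 ≤ s) (hs2 : s ≤ K) :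
    off K j (unoff K j s) = s := by
  have hK : 1 ≤ K := by omega
  refine nat_eq_of_congr (off_lb hK j _) (off_ub hK j _) hs1 hs2 ?_
  have h1 := off_dvd hK j (unoff K j s)
  have h2 := unoff_dvd hK j s
  have : ((off K j (unoff K j s) : ℕ) : ℤ) - s =
      -(((unoff K j s : ℕ):ℤ) - j - off K j (unoff K j s)) - ((j:ℤ) + s - unoff K j s) := by ring
  rw [this]
  exact dvd_sub (dvd_neg.mpr h1) h2

lemma off_self {K : ℕ} (hK : 1 ≤ K) (j : ℕ) : off K j j = K := by
  unfold off
  have : ((j:ℤ) - j) = 0 := by ring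
  rw [this]
  unfold zmod1
  simp

lemma off_ne_K {K j x : ℕ} (hj1 : 1 ≤ j) (hj2 : j ≤ K) (hx1 : 1 ≤ x) (hx2 : x ≤ K)
    (hne : x ≠ j) : off K j x ≠ K := by
  intro h
  have hK : 1 ≤ K := by omega
  have h2 := off_dvd hK j x
  rw [h] at h2
  have : ((x:ℤ) - j) = ((x:ℤ) - j - K) + K := by ring
  have hd : (K:ℤ) ∣ ((x:ℤ) - j) := by rw [this]; exact dvd_add h2 dvd_rfl
  exact hne (nat_eq_of_congr hx1 hx2 hj1 hj2 hd)

lemma zmod1_off_diff {K : ℕ} (hK : 1 ≤ K) (j x y : ℕ) :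
    zmod1 ((x:ℤ) - y) K = zmod1 ((off K j x : ℕ) - (off K j y : ℕ) : ℤ) K := by
  apply zmod1_congr
  have h1 := off_dvd hK j x
  have h2 := off_dvd hK j y
  have : ((x:ℤ) - y) - (((off K j x : ℕ):ℤ) - ((off K j y : ℕ):ℤ)) =
      ((x:ℤ) - j - off K j x) - ((y:ℤ) - j - off K j y) := by push_cast; ring
  rw [this]
  exact dvd_sub h1 h2

lemma zmod1_unoff_diff {K : ℕ} (hK : 1 ≤ K) (j a b : ℕ) :
    zmod1 ((unoff K j a : ℕ) - (unoff K j b : ℕ) : ℤ) K = zmod1 ((a:ℤ) - b) K := by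
  apply zmod1_congr
  have h1 := unoff_dvd hK j a
  have h2 := unoff_dvd hK j b
  have : (((unoff K j a : ℕ):ℤ) - ((unoff K j b : ℕ):ℤ)) - ((a:ℤ) - b) =
      -(((j:ℤ) + a - unoff K j a)) + ((j:ℤ) + b - unoff K j b) := by push_cast; ring
  rw [this]
  exact dvd_add (dvd_neg.mpr h1) h2

lemma zmod1_unoff_sub_j {K : ℕ} (hK : 1 ≤ K) (j s : ℕ) :
    zmod1 ((unoff K j s : ℕ) - (j:ℤ) : ℤ) K = zmod1 (s:ℤ) K := by
  apply zmod1_congr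
  have h1 := unoff_dvd hK j s
  have : (((unoff K j s : ℕ):ℤ) - j) - (s:ℤ) = -(((j:ℤ) + s - unoff K j s)) := by ring
  rw [this]
  exact dvd_neg.mpr h1

lemma zmod1_j_sub_unoff {K : ℕ} (hK : 1 ≤ K) (j s : ℕ) :
    zmod1 ((j:ℤ) - (unoff K j s : ℕ) : ℤ) K = zmod1 (-(s:ℤ)) K := by
  apply zmod1_congr
  have h1 := unoff_dvd hK j s
  have : ((j:ℤ) - ((unoff K j s : ℕ):ℤ)) - (-(s:ℤ)) = ((j:ℤ) + s - unoff K j s) := by ring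
  rw [this]
  exact h1


lemma chain {n G : ℕ} {f : Fin n → ℕ} (hf : ∀ i j : Fin n, (i:ℕ) < (j:ℕ) → f i + G ≤ f j) :
    ∀ (d : ℕ) (i j : Fin n), (j:ℕ) = (i:ℕ) + d → f i + d * G ≤ f j := by
  intro d
  induction d with
  | zero =>
    intro i j hij
    have : i = j := Fin.ext (by omega)
    subst this; simp
  | succ d ih =>
    intro i j hij
    have hm : (i:ℕ) + d < n := by have := j.isLt; omega
    have h1 := ih i ⟨(i:ℕ) + d, hm⟩ rfl
    have h2 := hf ⟨(i:ℕ) + d, hm⟩ j (by simp; omega)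
    have h3 : (d+1)*G = d*G + G := by ring
    omega

def down (n L : ℕ) (S : Finset ℕ) : Finset ℕ :=
  if h : S.card = n then
    Finset.image (fun k : Fin n => S.orderEmbOfFin h k - ((k:ℕ)+1)*(L-1)) Finset.univ
  else ∅

def up (n L : ℕ) (S : Finset ℕ) : Finset ℕ :=
  if h : S.card = n then
    Finset.image (fun k : Fin n => S.orderEmbOfFin h k + ((k:ℕ)+1)*(L-1)) Finset.univ
  else ∅

lemma mul_decomp' {m L : ℕ} (hL : 1 ≤ L) : m*L = m*(L-1) + m := by
  conv_lhs => rw [show L = (L-1)+1 by omega]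
  ring

lemma mul_decomp {k L : ℕ} (hL : 1 ≤ L) : (k+1)*L = (k+1)*(L-1) + (k+1) :=
  mul_decomp' hL

lemma mul_split {a b L : ℕ} (hab : a ≤ b) : (b+1)*(L-1) = (a+1)*(L-1) + (b-a)*(L-1) := by
  rw [← Nat.add_mul]
  congr 1
  omega

lemma down_spec (K t L : ℕ) (ht : 1 ≤ t) (hL : 1 ≤ L) (htL : t * L ≤ K)
    {S : Finset ℕ} (hsub : S ⊆ Finset.Icc L (K - L)) (hc : S.card = t - 1)
    (hgapS : ∀ x ∈ S, ∀ y ∈ S, x < y → x + L ≤ y) :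
    down (t-1) L S ⊆ Finset.Icc 1 (K - t*L + t - 1) ∧ (down (t-1) L S).card = t - 1 ∧
      up (t-1) L (down (t-1) L S) = S := by
  set n := t - 1 with hn
  set M := K - t*L + t - 1 with hM
  have hMK : M + t * L = K + t - 1 := by omega
  have hLK : L ≤ t * L := Nat.le_mul_of_pos_left L (by omega)
  set f : Fin n → ℕ := fun k => S.orderEmbOfFin hc k with hf
  have hfmem : ∀ k, f k ∈ S := fun k => S.orderEmbOfFin_mem hc k
  have hfIcc : ∀ k, L ≤ f k ∧ f k ≤ K - L := fun k => Finset.mem_Icc.mp (hsub (hfmem k))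
  have hmono : StrictMono f := (S.orderEmbOfFin hc).strictMono
  have hgap : ∀ i j : Fin n, (i:ℕ) < (j:ℕ) → f i + L ≤ f j := fun i j hij =>
    hgapS _ (hfmem i) _ (hfmem j) (hmono (Fin.lt_def.mpr hij))
  have hchain := chain hgap
  have hlow : ∀ k : Fin n, ((k:ℕ)+1)*L ≤ f k := by
    intro k
    have h0 : (0:ℕ) < n := k.pos
    have h1 := hchain (k:ℕ) ⟨0, h0⟩ k (by simp)
    have h2 : L ≤ f ⟨0, h0⟩ := (hfIcc _).1
    have h3 : ((k:ℕ)+1)*L = (k:ℕ)*L + L := by ring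
    omega
  have hhigh : ∀ k : Fin n, f k + (n - 1 - (k:ℕ))*L ≤ K - L := by
    intro k
    have h0 : n - 1 < n := by have := k.pos; omega
    have h1 := hchain (n - 1 - (k:ℕ)) k ⟨n-1, h0⟩ (by simp; have := k.isLt; omega)
    have h2 : f ⟨n-1,h0⟩ ≤ K - L := (hfIcc _).2
    omega
  set v : Fin n → ℕ := fun k => f k - ((k:ℕ)+1)*(L-1) with hv
  have hsubrec : ∀ k : Fin n, v k + ((k:ℕ)+1)*(L-1) = f k := by
    intro k
    have := hlow k
    have := mul_decomp (k := (k:ℕ)) hL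
    simp only [hv]
    omega
  have hv_lb : ∀ k : Fin n, 1 ≤ v k := by
    intro k
    have := hlow k
    have := mul_decomp (k := (k:ℕ)) hL
    simp only [hv]
    omega
  have hv_ub : ∀ k : Fin n, v k ≤ M := by
    intro k
    have h1 := hhigh k
    have h2 := mul_decomp (k := (k:ℕ)) hL
    have hk : (k:ℕ) ≤ n - 1 := by have := k.isLt; omega
    have h3 : t * L = ((k:ℕ)+1)*L + (n-1-(k:ℕ))*L + L := by
      rw [show t = (k:ℕ) + 1 + (n - 1 - (k:ℕ)) + 1 from by have := k.isLt; omega]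
      ring
    have h4 := hfIcc k
    simp only [hv]
    omega
  have hvlt : ∀ i j : Fin n, (i:ℕ) < (j:ℕ) → v i < v j := by
    intro i j hij
    have h1 := hchain ((j:ℕ)-(i:ℕ)) i j (by omega)
    have h2 := mul_split (L := L) (le_of_lt hij)
    have h3 : ((j:ℕ)-(i:ℕ))*L = ((j:ℕ)-(i:ℕ))*(L-1) + ((j:ℕ)-(i:ℕ)) := by
      conv_lhs => rw [show L = (L-1)+1 by omega]
      ring
    have h4 := hlow i
    have h5 := mul_decomp (k := (i:ℕ)) hL
    simp only [hv]
    omega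
  have hvmono : StrictMono v := fun i j hij => hvlt i j (Fin.lt_def.mp hij)
  have hdown : down n L S = Finset.image v Finset.univ := dif_pos hc
  have hcard : (down n L S).card = n := by
    rw [hdown, Finset.card_image_of_injective _ hvmono.injective, Finset.card_univ,
      Fintype.card_fin]
  have hsub' : down n L S ⊆ Finset.Icc 1 M := by
    rw [hdown]
    intro x hx
    obtain ⟨k, _, rfl⟩ := Finset.mem_image.mp hx
    exact Finset.mem_Icc.mpr ⟨hv_lb k, hv_ub k⟩
  refine ⟨hsub', hcard, ?_⟩
  -- up (down S) = S
  have huniq : v = ⇑((down n L S).orderEmbOfFin hcard) :=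
    Finset.orderEmbOfFin_unique hcard
      (fun k => by rw [hdown]; exact Finset.mem_image_of_mem _ (Finset.mem_univ k)) hvmono
  have hup : up n L (down n L S) =
      Finset.image (fun k : Fin n => (down n L S).orderEmbOfFin hcard k + ((k:ℕ)+1)*(L-1))
        Finset.univ := dif_pos hcard
  rw [hup]
  have : ∀ k : Fin n, (down n L S).orderEmbOfFin hcard k + ((k:ℕ)+1)*(L-1) = f k := by
    intro k
    rw [← congrFun huniq k]
    exact hsubrec k
  rw [Finset.image_congr (fun k _ => this k)]
  -- image f univ = S
  apply Finset.eq_of_subset_of_card_le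
  · intro x hx
    obtain ⟨k, _, rfl⟩ := Finset.mem_image.mp hx
    exact hfmem k
  · rw [Finset.card_image_of_injective _ hmono.injective, Finset.card_univ, Fintype.card_fin, hc]


lemma up_spec (K t L : ℕ) (ht : 1 ≤ t) (hL : 1 ≤ L) (htL : t * L ≤ K)
    {S : Finset ℕ} (hsub : S ⊆ Finset.Icc 1 (K - t*L + t - 1)) (hc : S.card = t - 1) :
    up (t-1) L S ⊆ Finset.Icc L (K-L) ∧ (up (t-1) L S).card = t - 1 ∧
      (∀ x ∈ up (t-1) L S, ∀ y ∈ up (t-1) L S, x < y → x + L ≤ y) ∧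
      down (t-1) L (up (t-1) L S) = S := by
  set n := t - 1 with hn
  set M := K - t*L + t - 1 with hM
  have hMK : M + t * L = K + t - 1 := by omega
  have hLK : L ≤ t * L := Nat.le_mul_of_pos_left L (by omega)
  set g : Fin n → ℕ := fun k => S.orderEmbOfFin hc k with hg
  have hgmem : ∀ k, g k ∈ S := fun k => S.orderEmbOfFin_mem hc k
  have hgIcc : ∀ k, 1 ≤ g k ∧ g k ≤ M := fun k => Finset.mem_Icc.mp (hsub (hgmem k))
  have hmono : StrictMono g := (S.orderEmbOfFin hc).strictMono
  have hgap1 : ∀ i j : Fin n, (i:ℕ) < (j:ℕ) → g i + 1 ≤ g j := fun i j hij =>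
    hmono (Fin.lt_def.mpr hij)
  have hchain1 := chain hgap1
  have hlow1 : ∀ k : Fin n, (k:ℕ)+1 ≤ g k := by
    intro k
    have h0 : (0:ℕ) < n := k.pos
    have h1 := hchain1 (k:ℕ) ⟨0, h0⟩ k (by simp)
    have h2 : 1 ≤ g ⟨0, h0⟩ := (hgIcc _).1
    omega
  have hhigh1 : ∀ k : Fin n, g k + (n - 1 - (k:ℕ)) ≤ M := by
    intro k
    have h0 : n - 1 < n := by have := k.pos; omega
    have h1 := hchain1 (n - 1 - (k:ℕ)) k ⟨n-1, h0⟩ (by simp; have := k.isLt; omega)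
    have h2 : g ⟨n-1,h0⟩ ≤ M := (hgIcc _).2
    omega
  set w : Fin n → ℕ := fun k => g k + ((k:ℕ)+1)*(L-1) with hw
  have hw_lb : ∀ k : Fin n, L ≤ w k := by
    intro k
    have h1 := hlow1 k
    have h2 := mul_decomp (k := (k:ℕ)) hL
    have h3 : L ≤ ((k:ℕ)+1)*L := Nat.le_mul_of_pos_left L (by omega)
    simp only [hw]
    omega
  have hw_ub : ∀ k : Fin n, w k ≤ K - L := by
    intro k
    have h1 := hhigh1 k
    have h2 := mul_decomp (k := (k:ℕ)) hL
    have h3 : t * L = ((k:ℕ)+1)*L + (n-1-(k:ℕ))*L + L := by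
      rw [show t = (k:ℕ) + 1 + (n - 1 - (k:ℕ)) + 1 from by have := k.isLt; omega]
      ring
    have h4 : (n-1-(k:ℕ)) ≤ (n-1-(k:ℕ))*L := Nat.le_mul_of_pos_right _ (by omega)
    simp only [hw]
    omega
  have hwgap : ∀ i j : Fin n, (i:ℕ) < (j:ℕ) → w i + L ≤ w j := by
    intro i j hij
    have h1 := hchain1 ((j:ℕ)-(i:ℕ)) i j (by omega)
    have h2 := mul_split (L := L) (le_of_lt hij)
    have h3 := mul_decomp' (m := (j:ℕ)-(i:ℕ)) hL
    have h4 : L ≤ ((j:ℕ)-(i:ℕ))*L := Nat.le_mul_of_pos_left L (by omega)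
    simp only [hw]
    omega
  have hwmono : StrictMono w := fun i j hij => by
    have := hwgap i j (Fin.lt_def.mp hij); omega
  have hup : up n L S = Finset.image w Finset.univ := dif_pos hc
  have hcard : (up n L S).card = n := by
    rw [hup, Finset.card_image_of_injective _ hwmono.injective, Finset.card_univ,
      Fintype.card_fin]
  have hsub' : up n L S ⊆ Finset.Icc L (K-L) := by
    rw [hup]
    intro x hx
    obtain ⟨k, _, rfl⟩ := Finset.mem_image.mp hx
    exact Finset.mem_Icc.mpr ⟨hw_lb k, hw_ub k⟩
  refine ⟨hsub', hcard, ?_, ?_⟩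
  · -- gap property
    intro x hx y hy hxy
    rw [hup] at hx hy
    obtain ⟨i, _, rfl⟩ := Finset.mem_image.mp hx
    obtain ⟨j, _, rfl⟩ := Finset.mem_image.mp hy
    rcases lt_trichotomy ((i:ℕ)) ((j:ℕ)) with h | h | h
    · exact hwgap i j h
    · exact absurd (congrArg w (Fin.ext h)) (by intro he; omega)
    · exact absurd (hwmono (Fin.lt_def.mpr h)) (by omega)
  · -- down (up S) = S
    have huniq : w = ⇑((up n L S).orderEmbOfFin hcard) :=
      Finset.orderEmbOfFin_unique hcard
        (fun k => by rw [hup]; exact Finset.mem_image_of_mem _ (Finset.mem_univ k)) hwmono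
    have hdown : down n L (up n L S) =
        Finset.image (fun k : Fin n => (up n L S).orderEmbOfFin hcard k - ((k:ℕ)+1)*(L-1))
          Finset.univ := dif_pos hcard
    rw [hdown]
    have heq : ∀ k : Fin n, (up n L S).orderEmbOfFin hcard k - ((k:ℕ)+1)*(L-1) = g k := by
      intro k
      rw [← congrFun huniq k]
      simp only [hw]
      omega
    rw [Finset.image_congr (fun k _ => heq k)]
    apply Finset.eq_of_subset_of_card_le
    · intro x hx
      obtain ⟨k, _, rfl⟩ := Finset.mem_image.mp hx
      exact hgmem k
    · rw [Finset.card_image_of_injective _ hmono.injective, Finset.card_univ,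
        Fintype.card_fin, hc]

lemma gap_count (K t L : ℕ) (ht : 1 ≤ t) (hL : 1 ≤ L) (htL : t * L ≤ K) :
    (((Finset.Icc L (K - L)).powersetCard (t - 1)).filter
      (fun S => ∀ x ∈ S, ∀ y ∈ S, x < y → x + L ≤ y)).card
      = (K - t * L + t - 1).choose (t - 1) := by
  have hR : ((Finset.Icc 1 (K - t * L + t - 1)).powersetCard (t-1)).card
      = (K - t * L + t - 1).choose (t - 1) := by
    rw [Finset.card_powersetCard, Nat.card_Icc]
    congr 1
  rw [← hR]
  apply Finset.card_nbij' (i := down (t-1) L) (j := up (t-1) L)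
  · intro S hS
    rw [Finset.mem_coe, Finset.mem_filter, Finset.mem_powersetCard] at hS
    obtain ⟨⟨hsub, hc⟩, hgapS⟩ := hS
    obtain ⟨h1, h2, _⟩ := down_spec K t L ht hL htL hsub hc hgapS
    exact Finset.mem_powersetCard.mpr ⟨h1, h2⟩
  · intro S hS
    rw [Finset.mem_coe, Finset.mem_powersetCard] at hS
    obtain ⟨hsub, hc⟩ := hS
    obtain ⟨h1, h2, h3, _⟩ := up_spec K t L ht hL htL hsub hc
    exact Finset.mem_filter.mpr ⟨Finset.mem_powersetCard.mpr ⟨h1, h2⟩, h3⟩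
  · intro S hS
    rw [Finset.mem_coe, Finset.mem_filter, Finset.mem_powersetCard] at hS
    obtain ⟨⟨hsub, hc⟩, hgapS⟩ := hS
    exact (down_spec K t L ht hL htL hsub hc hgapS).2.2
  · intro S hS
    rw [Finset.mem_coe, Finset.mem_powersetCard] at hS
    obtain ⟨hsub, hc⟩ := hS
    exact (up_spec K t L ht hL htL hsub hc).2.2.2


lemma fiber_card (K t L : ℕ) (ht : 1 ≤ t) (hL : 1 ≤ L) (hK : 1 ≤ K) (htL : t * L ≤ K)
    (j : ℕ) (hj1 : 1 ≤ j) (hj2 : j ≤ K) :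
    ((((Finset.Icc 1 K).powersetCard t).filter
      (fun T => ∀ j1 : ℕ, j1 ∈ T → ∀ j2 : ℕ, j2 ∈ T → j1 ≠ j2 →
        (L : ℤ) ≤ zmod1 ((j1 : ℤ) - (j2 : ℤ)) K)).filter (fun T => j ∈ T)).card
    = (((Finset.Icc L (K - L)).powersetCard (t - 1)).filter
      (fun S => ∀ x ∈ S, ∀ y ∈ S, x < y → x + L ≤ y)).card := by
  have hLK : L ≤ K := le_trans (Nat.le_mul_of_pos_left L (by omega)) htL
  apply Finset.card_nbij' (i := fun T => Finset.image (off K j) (T.erase j))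
    (j := fun S => insert j (Finset.image (unoff K j) S))
  · -- forward membership
    intro T hT
    simp only [Finset.mem_coe, Finset.mem_filter, Finset.mem_powersetCard] at hT
    obtain ⟨⟨⟨hTsub, hTc⟩, hP⟩, hjT⟩ := hT
    have hTmem : ∀ x ∈ T, 1 ≤ x ∧ x ≤ K := fun x hx => Finset.mem_Icc.mp (hTsub hx)
    simp only [Finset.mem_coe, Finset.mem_filter, Finset.mem_powersetCard]
    refine ⟨⟨?_, ?_⟩, ?_⟩
    · -- subset Icc L (K-L)
      intro a ha
      obtain ⟨x, hx, rfl⟩ := Finset.mem_image.mp ha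
      have hxe := Finset.mem_of_mem_erase hx
      have hxj : x ≠ j := Finset.ne_of_mem_erase hx
      obtain ⟨hx1, hx2⟩ := hTmem x hxe
      have hlb : (L:ℤ) ≤ zmod1 ((x:ℤ) - j) K := hP x hxe j hjT hxj
      have hcast := off_cast hK j x
      have hoff1 : L ≤ off K j x := by
        have : (L:ℤ) ≤ ((off K j x : ℕ) : ℤ) := by rw [hcast]; exact hlb
        exact_mod_cast this
      have hoffK : off K j x ≠ K := off_ne_K hj1 hj2 hx1 hx2 hxj
      have hoffub := off_ub hK j x
      have hub : (L:ℤ) ≤ zmod1 ((j:ℤ) - x) K := hP j hjT x hxe (Ne.symm hxj)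
      have hneg : zmod1 ((j:ℤ) - x) K = ((K - off K j x : ℕ) : ℤ) := by
        rw [show ((j:ℤ) - x) = -(((x:ℤ) - j)) by ring]
        have hcongr : zmod1 (-((x:ℤ) - j)) K = zmod1 (-((off K j x : ℕ):ℤ)) K := by
          apply zmod1_congr
          have := off_dvd hK j x
          have heq : -((x:ℤ) - j) - (-((off K j x : ℕ):ℤ)) = -(((x:ℤ) - j - off K j x)) := by
            ring
          rw [heq]
          exact dvd_neg.mpr this
        rw [hcongr]
        exact zmod1_neg_nat (off_lb hK j x) (by omega)
      rw [hneg] at hub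
      have : L ≤ K - off K j x := by exact_mod_cast hub
      exact Finset.mem_Icc.mpr ⟨hoff1, by omega⟩
    · -- card
      rw [Finset.card_image_of_injOn, Finset.card_erase_of_mem hjT, hTc]
      intro x hx y hy hxy
      simp only [Finset.coe_erase, Set.mem_diff] at hx hy
      obtain ⟨hx1, hx2⟩ := hTmem x (hx.1)
      obtain ⟨hy1, hy2⟩ := hTmem y (hy.1)
      rw [← unoff_off hj1 hj2 hx1 hx2, ← unoff_off hj1 hj2 hy1 hy2, hxy]
    · -- gap
      intro a ha b hb hab
      obtain ⟨x, hx, rfl⟩ := Finset.mem_image.mp ha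
      obtain ⟨y, hy, rfl⟩ := Finset.mem_image.mp hb
      have hxe := Finset.mem_of_mem_erase hx
      have hye := Finset.mem_of_mem_erase hy
      obtain ⟨hx1, hx2⟩ := hTmem x hxe
      obtain ⟨hy1, hy2⟩ := hTmem y hye
      have hxy : x ≠ y := fun h => by subst h; omega
      have h1 : (L:ℤ) ≤ zmod1 ((y:ℤ) - x) K := hP y hye x hxe (Ne.symm hxy)
      have h2 : zmod1 ((y:ℤ) - x) K = zmod1 (((off K j y : ℕ):ℤ) - ((off K j x : ℕ):ℤ)) K :=
        zmod1_off_diff hK j y x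
      have hmax := off_ub hK j y
      have hmin := off_lb hK j x
      have h3 : zmod1 (((off K j y : ℕ):ℤ) - ((off K j x : ℕ):ℤ)) K
          = ((off K j y - off K j x : ℕ) : ℤ) := by
        rw [show (((off K j y : ℕ):ℤ) - ((off K j x : ℕ):ℤ))
            = ((off K j y - off K j x : ℕ) : ℤ) by push_cast [Nat.cast_sub (le_of_lt hab)]; ring]
        exact zmod1_nat (by omega) (by omega)
      rw [h2, h3] at h1
      have : L ≤ off K j y - off K j x := by exact_mod_cast h1
      omega
  · -- backward membership
    intro S hS
    simp only [Finset.mem_coe, Finset.mem_filter, Finset.mem_powersetCard] at hS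
    obtain ⟨⟨hSsub, hSc⟩, hSgap⟩ := hS
    have hSmem : ∀ s ∈ S, L ≤ s ∧ s ≤ K - L := fun s hs => Finset.mem_Icc.mp (hSsub hs)
    have hu_range : ∀ s ∈ S, 1 ≤ unoff K j s ∧ unoff K j s ≤ K :=
      fun s _ => ⟨unoff_lb hK j s, unoff_ub hK j s⟩
    have huj : ∀ s ∈ S, unoff K j s ≠ j := by
      intro s hs he
      obtain ⟨hs1, hs2⟩ := hSmem s hs
      have := off_unoff hj1 hj2 (by omega : 1 ≤ s) (by omega : s ≤ K)
      rw [he, off_self hK j] at this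
      omega
    have hjnotin : j ∉ Finset.image (unoff K j) S := by
      intro h
      obtain ⟨s, hs, he⟩ := Finset.mem_image.mp h
      exact huj s hs he
    simp only [Finset.mem_coe, Finset.mem_filter, Finset.mem_powersetCard]
    refine ⟨⟨⟨?_, ?_⟩, ?_⟩, Finset.mem_insert_self j _⟩
    · -- subset Icc 1 K
      intro x hx
      rcases Finset.mem_insert.mp hx with rfl | hx
      · exact Finset.mem_Icc.mpr ⟨hj1, hj2⟩
      · obtain ⟨s, hs, rfl⟩ := Finset.mem_image.mp hx
        exact Finset.mem_Icc.mpr (hu_range s hs)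
    · -- card
      rw [Finset.card_insert_of_notMem hjnotin, Finset.card_image_of_injOn, hSc]
      · omega
      · intro a ha b hb hab
        obtain ⟨ha1, ha2⟩ := hSmem a ha
        obtain ⟨hb1, hb2⟩ := hSmem b hb
        rw [← off_unoff hj1 hj2 (by omega : 1 ≤ a) (by omega : a ≤ K),
          ← off_unoff hj1 hj2 (by omega : 1 ≤ b) (by omega : b ≤ K), hab]
    · -- pairwise condition
      intro x hx y hy hxy
      rcases Finset.mem_insert.mp hx with rfl | hx'
      · -- x = j, y = unoff s
        rcases Finset.mem_insert.mp hy with rfl | hy'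
        · exact absurd rfl hxy
        obtain ⟨s, hs, rfl⟩ := Finset.mem_image.mp hy'
        obtain ⟨hs1, hs2⟩ := hSmem s hs
        rw [zmod1_j_sub_unoff hK x s, zmod1_neg_nat (by omega) (by omega)]
        have : L ≤ K - s := by omega
        exact_mod_cast this
      · rcases Finset.mem_insert.mp hy with rfl | hy'
        · -- y = j, x = unoff s
          obtain ⟨s, hs, rfl⟩ := Finset.mem_image.mp hx'
          obtain ⟨hs1, hs2⟩ := hSmem s hs
          rw [zmod1_unoff_sub_j hK y s, zmod1_nat (by omega) (by omega)]
          exact_mod_cast hs1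
        · -- both images
          obtain ⟨a, ha, rfl⟩ := Finset.mem_image.mp hx'
          obtain ⟨b, hb, rfl⟩ := Finset.mem_image.mp hy'
          obtain ⟨ha1, ha2⟩ := hSmem a ha
          obtain ⟨hb1, hb2⟩ := hSmem b hb
          have hab : a ≠ b := fun h => hxy (by rw [h])
          rw [zmod1_unoff_diff hK j a b]
          rcases lt_or_gt_of_ne hab with h | h
          · -- a < b : zmod1 (a - b) = K - (b - a)
            have hcongr : zmod1 ((a:ℤ) - b) K = zmod1 (-(((b - a : ℕ)):ℤ)) K := by
              apply zmod1_congr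
              rw [show ((a:ℤ) - b) - (-(((b - a : ℕ)):ℤ)) = 0 by
                push_cast [Nat.cast_sub (le_of_lt h)]; ring]
              exact dvd_zero _
            rw [hcongr, zmod1_neg_nat (by omega) (by omega)]
            have : L ≤ K - (b - a) := by omega
            exact_mod_cast this
          · -- b < a : zmod1 (a - b) = a - b ≥ L by gap
            have hgap := hSgap b hb a ha h
            rw [show ((a:ℤ) - b) = (((a - b : ℕ)):ℤ) by
              push_cast [Nat.cast_sub (le_of_lt h)]; ring]
            rw [zmod1_nat (by omega) (by omega)]
            have : L ≤ a - b := by omega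
            exact_mod_cast this
  · -- left inverse
    intro T hT
    simp only [Finset.mem_coe, Finset.mem_filter, Finset.mem_powersetCard] at hT
    obtain ⟨⟨⟨hTsub, hTc⟩, hP⟩, hjT⟩ := hT
    have hTmem : ∀ x ∈ T, 1 ≤ x ∧ x ≤ K := fun x hx => Finset.mem_Icc.mp (hTsub hx)
    beta_reduce
    rw [Finset.image_image]
    have : Finset.image (unoff K j ∘ off K j) (T.erase j) = T.erase j := by
      rw [Finset.image_congr (g := id), Finset.image_id]
      intro x hx
      obtain ⟨hx1, hx2⟩ := hTmem x (Finset.mem_of_mem_erase hx)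
      exact unoff_off hj1 hj2 hx1 hx2
    rw [this, Finset.insert_erase hjT]
  · -- right inverse
    intro S hS
    simp only [Finset.mem_coe, Finset.mem_filter, Finset.mem_powersetCard] at hS
    obtain ⟨⟨hSsub, hSc⟩, hSgap⟩ := hS
    have hSmem : ∀ s ∈ S, L ≤ s ∧ s ≤ K - L := fun s hs => Finset.mem_Icc.mp (hSsub hs)
    have hjnotin : j ∉ Finset.image (unoff K j) S := by
      intro h
      obtain ⟨s, hs, he⟩ := Finset.mem_image.mp h
      obtain ⟨hs1, hs2⟩ := hSmem s hs
      have := off_unoff hj1 hj2 (by omega : 1 ≤ s) (by omega : s ≤ K)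
      rw [he, off_self hK j] at this
      omega
    beta_reduce
    rw [Finset.erase_insert hjnotin, Finset.image_image]
    rw [Finset.image_congr (g := id), Finset.image_id]
    intro s hs
    obtain ⟨hs1, hs2⟩ := hSmem s hs
    exact off_unoff hj1 hj2 (by omega) (by omega)

end Stmt4Aux

/-- `t` times the number of `t`-element subsets `T` of `{1,…,K}` all of
whose pairs are at cyclic distance at least `L` in `ℤ/Kℤ`
(`Mod(j1−j2,K) ≥ L` for all distinct `j1, j2 ∈ T`) equals
`K · C(K − tL + t − 1, t − 1)`. -/
theorem stmt_4 (K t L : ℕ) (ht : 1 ≤ t) (hL : 1 ≤ L) (hK : 1 ≤ K) (htL : t * L ≤ K) :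
    t * (((Finset.Icc 1 K).powersetCard t).filter
      (fun T => ∀ j1 : ℕ, j1 ∈ T → ∀ j2 : ℕ, j2 ∈ T → j1 ≠ j2 →
        (L : ℤ) ≤ zmod1 ((j1 : ℤ) - (j2 : ℤ)) K)).card
      = K * (K - t * L + t - 1).choose (t - 1) := by
  set F := ((Finset.Icc 1 K).powersetCard t).filter
      (fun T => ∀ j1 : ℕ, j1 ∈ T → ∀ j2 : ℕ, j2 ∈ T → j1 ≠ j2 →
        (L : ℤ) ≤ zmod1 ((j1 : ℤ) - (j2 : ℤ)) K) with hF
  have hcardT : ∀ T ∈ F, T.card = t := fun T hT =>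
    (Finset.mem_powersetCard.mp (Finset.mem_filter.mp hT).1).2
  have hsubT : ∀ T ∈ F, T ⊆ Finset.Icc 1 K := fun T hT =>
    (Finset.mem_powersetCard.mp (Finset.mem_filter.mp hT).1).1
  have h1 : t * F.card = ∑ T ∈ F, T.card := by
    rw [Finset.sum_congr rfl hcardT, Finset.sum_const, smul_eq_mul, mul_comm]
  have h2 : ∑ T ∈ F, T.card = ∑ x ∈ Finset.Icc 1 K, (F.filter (fun T => x ∈ T)).card := by
    simp only [Finset.card_filter]
    rw [Finset.sum_comm]
    apply Finset.sum_congr rfl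
    intro T hT
    have hfe : (Finset.Icc 1 K).filter (fun x => x ∈ T) = T := by
      rw [Finset.filter_mem_eq_inter, Finset.inter_eq_right.mpr (hsubT T hT)]
    rw [← Finset.sum_filter, hfe, Finset.card_eq_sum_ones]
  have h3 : ∀ x ∈ Finset.Icc 1 K, (F.filter (fun T => x ∈ T)).card
      = (K - t * L + t - 1).choose (t - 1) := by
    intro x hx
    obtain ⟨hx1, hx2⟩ := Finset.mem_Icc.mp hx
    rw [hF]
    exact (Stmt4Aux.fiber_card K t L ht hL hK htL x hx1 hx2).trans
      (Stmt4Aux.gap_count K t L ht hL htL)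
  rw [h1, h2, Finset.sum_congr rfl h3, Finset.sum_const, Nat.card_Icc, smul_eq_mul]
  congr 1
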